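/- Let G ∈ ℝ^{P × P} be a nonzero symmetric positive semidefinite matrix, let τ > 0 be its smallest nonzero eigenvalue, let 𝒫(G) denote the orthogonal projection onto the image of G, and let α > 0. Then in operator (spectral) norm: ‖(α I_P + G)⁻¹ − α⁻¹ (I_P − 𝒫(G))‖ ≤ 1/(τ + α). -/

import Mathlib

open Matrix

/-- For a nonzero symmetric psd matrix `G` with smallest nonzero eigenvalue
`τ > 0`, orthogonal projection `Q = 𝒫(G)` onto the image of `G`, and `α > 0`, the spectral
norm of the difference between the LLA covariance `(α I + G)⁻¹` and the scaled projected
covariance `α⁻¹ (I - Q)` is at most `1/(τ + α)`. -/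
theorem lla_vs_projected_covariance_spectral_bound
    (P : ℕ)
    (G : Matrix (Fin P) (Fin P) ℝ) (hG : G.PosSemidef) (hG0 : G ≠ 0)
    (α : ℝ) (hα : 0 < α)
    (τ : ℝ) (hτ : 0 < τ)
    -- `τ` is the smallest nonzero eigenvalue of `G`:
    (hτ_le : ∀ v : Fin P → ℝ, (∃ w, v = G.mulVec w) → τ * (v ⬝ᵥ v) ≤ G.mulVec v ⬝ᵥ v)
    (hτ_ex : ∃ v : Fin P → ℝ, v ≠ 0 ∧ G.mulVec v = τ • v)
    -- `Q` is the orthogonal projection onto the image of `G`: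
    (Q : Matrix (Fin P) (Fin P) ℝ)
    (hQsym : Qᵀ = Q) (hQidem : Q * Q = Q)
    (hQfix : Q * G = G)
    (hQrange : ∀ v : Fin P → ℝ, ∃ w, Q.mulVec v = G.mulVec w) :
    ‖Matrix.toEuclideanCLM (𝕜 := ℝ)
        ((α • (1 : Matrix (Fin P) (Fin P) ℝ) + G)⁻¹ -
          α⁻¹ • ((1 : Matrix (Fin P) (Fin P) ℝ) - Q))‖ ≤ 1 / (τ + α) := by
  classical
  set M : Matrix (Fin P) (Fin P) ℝ := α • (1 : Matrix (Fin P) (Fin P) ℝ) + G with hMdef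
  have hGsym : Gᵀ = G := by
    rw [← conjTranspose_eq_transpose_of_trivial]; exact hG.1
  have hGQ : G * Q = G := by
    calc G * Q = (Qᵀ * Gᵀ)ᵀ := by simp [transpose_mul]
    _ = (Q * G)ᵀ := by rw [hQsym, hGsym]
    _ = G := by rw [hQfix, hGsym]
  have hM : M.PosDef := by
    exact Matrix.PosDef.add_posSemidef (Matrix.PosDef.one.smul hα) hG
  have hdet : IsUnit M.det := (Matrix.isUnit_iff_isUnit_det M).mp hM.isUnit
  have hMinv : M * M⁻¹ = 1 := Matrix.mul_nonsing_inv M hdet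
  have hinvM : M⁻¹ * M = 1 := Matrix.nonsing_inv_mul M hdet
  have hMQ : M * Q = α • Q + G := by
    rw [hMdef, add_mul, smul_mul_assoc, one_mul, hGQ]
  have hQM : Q * M = α • Q + G := by
    rw [hMdef, mul_add, mul_smul_comm, mul_one, hQfix]
  have hQMcomm : Q * M = M * Q := by rw [hQM, hMQ]
  letI : Invertible M := M.invertibleOfIsUnitDet hdet
  have hcomm : Q * M⁻¹ = M⁻¹ * Q := by
    have h : Commute Q M := hQMcomm
    have h2 := h.invOf_right
    rwa [Matrix.invOf_eq_nonsing_inv] at h2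
  have hD : M⁻¹ - α⁻¹ • ((1 : Matrix (Fin P) (Fin P) ℝ) - Q) = M⁻¹ * Q := by
    have h1 : M * (M⁻¹ - α⁻¹ • ((1 : Matrix (Fin P) (Fin P) ℝ) - Q)) = Q := by
      rw [mul_sub, hMinv, Matrix.mul_smul, mul_sub, mul_one, hMQ]
      have h2 : M - (α • Q + G) = α • ((1 : Matrix (Fin P) (Fin P) ℝ) - Q) := by
        rw [hMdef, smul_sub]; abel
      rw [h2, smul_smul, inv_mul_cancel₀ hα.ne', one_smul, sub_sub_cancel]
    calc M⁻¹ - α⁻¹ • ((1 : Matrix (Fin P) (Fin P) ℝ) - Q)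
        = M⁻¹ * (M * (M⁻¹ - α⁻¹ • ((1 : Matrix (Fin P) (Fin P) ℝ) - Q))) := by
          rw [← Matrix.mul_assoc, hinvM, one_mul]
    _ = M⁻¹ * Q := by rw [h1]
  set D : Matrix (Fin P) (Fin P) ℝ := M⁻¹ * Q with hDdef
  have hQD : Q * D = D := by
    calc Q * (M⁻¹ * Q) = (Q * M⁻¹) * Q := by rw [Matrix.mul_assoc]
    _ = M⁻¹ * (Q * Q) := by rw [hcomm, Matrix.mul_assoc]
    _ = M⁻¹ * Q := by rw [hQidem]
  have hMD : M * D = Q := by rw [hDdef, ← Matrix.mul_assoc, hMinv, one_mul]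
  rw [hD]
  have hτα : 0 < τ + α := by linarith
  apply ContinuousLinearMap.opNorm_le_bound _ (by positivity)
  intro x
  set e : (Fin P → ℝ) ≃ₗ[ℝ] EuclideanSpace ℝ (Fin P) := (WithLp.linearEquiv 2 ℝ (Fin P → ℝ)).symm with hedef
  have hinner : ∀ a b : Fin P → ℝ, (inner ℝ (e a) (e b) : ℝ) = a ⬝ᵥ b := by
    intro a b
    simp [hedef, PiLp.inner_apply, RCLike.inner_apply, dotProduct, mul_comm]
  have hnorm_sq : ∀ a : Fin P → ℝ, a ⬝ᵥ a = ‖e a‖ ^ 2 := by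
    intro a
    rw [← hinner a a, real_inner_self_eq_norm_sq]
  have hCS : ∀ a b : Fin P → ℝ, a ⬝ᵥ b ≤ ‖e a‖ * ‖e b‖ := by
    intro a b
    rw [← hinner a b]
    exact real_inner_le_norm _ _
  set u : Fin P → ℝ := (WithLp.equiv 2 (Fin P → ℝ)) x with hudef
  have hxu : x = e u := by simp [hedef, hudef]
  set v : Fin P → ℝ := D *ᵥ u with hvdef
  have hTx : (Matrix.toEuclideanCLM (𝕜 := ℝ) D) x = e v := by
    rw [hxu]
    exact Matrix.toEuclideanCLM_toLp (𝕜 := ℝ) D u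
  have hQv : Q *ᵥ v = v := by rw [hvdef, Matrix.mulVec_mulVec, hQD]
  have hMv : M *ᵥ v = Q *ᵥ u := by rw [hvdef, Matrix.mulVec_mulVec, hMD]
  -- Q is a contraction
  have hQuQu : (Q *ᵥ u) ⬝ᵥ (Q *ᵥ u) = (Q *ᵥ u) ⬝ᵥ u := by
    conv_lhs => rw [Matrix.dotProduct_mulVec]
    have : (Q *ᵥ u) ᵥ* Q = Q *ᵥ (Q *ᵥ u) := by
      rw [← hQsym, Matrix.vecMul_transpose, hQsym]
    rw [this, Matrix.mulVec_mulVec, hQidem]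
  have hQle : ‖e (Q *ᵥ u)‖ ≤ ‖e u‖ := by
    have h1 : ‖e (Q *ᵥ u)‖ ^ 2 ≤ ‖e (Q *ᵥ u)‖ * ‖e u‖ := by
      rw [← hnorm_sq, hQuQu]; exact hCS _ _
    rcases eq_or_lt_of_le (norm_nonneg (e (Q *ᵥ u))) with h | h
    · rw [← h]; exact norm_nonneg _
    · nlinarith
  -- lower bound on the quadratic form on range G
  have hv_range : ∃ w, v = G *ᵥ w := by
    obtain ⟨w, hw⟩ := hQrange v
    exact ⟨w, by rw [← hQv, hw]⟩
  have h4 := hτ_le v hv_range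
  have hMv' : M *ᵥ v = α • v + G *ᵥ v := by
    rw [hMdef, Matrix.add_mulVec, smul_mulVec, one_mulVec]
  have h3 : (τ + α) * (v ⬝ᵥ v) ≤ (M *ᵥ v) ⬝ᵥ v := by
    rw [hMv', add_dotProduct, smul_dotProduct, smul_eq_mul]
    nlinarith [h4]
  have h5 : (M *ᵥ v) ⬝ᵥ v ≤ ‖e u‖ * ‖e v‖ := by
    rw [hMv]
    calc (Q *ᵥ u) ⬝ᵥ v ≤ ‖e (Q *ᵥ u)‖ * ‖e v‖ := hCS _ _
    _ ≤ ‖e u‖ * ‖e v‖ := mul_le_mul_of_nonneg_right hQle (norm_nonneg _)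
  have hkey : (τ + α) * ‖e v‖ ^ 2 ≤ ‖e u‖ * ‖e v‖ := by
    rw [← hnorm_sq]; linarith
  have hxnorm : ‖x‖ = ‖e u‖ := by rw [hxu]
  rw [hTx, hxnorm]
  rcases eq_or_lt_of_le (norm_nonneg (e v)) with h | h
  · rw [← h]; positivity
  · rw [div_mul_eq_mul_div, le_div_iff₀ hτα]
    nlinarith
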